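/- arXiv:2502.02345 — 3 statements merged into one kernel-verified Lean document; each statement's English description precedes it below -/
import Mathlib

section
/- Let Ψ be symmetric positive definite p×p, J an (nC)×p matrix, and P a p×s matrix of full column rank. Define Σ = J Ψ Jᵀ and Σ_P = J P (Pᵀ Ψ⁻¹ P)⁻¹ Pᵀ Jᵀ. Then Σ − Σ_P is positive semidefinite (Σ_P ≼ Σ in the Loewner order). -/
open Matrix

/-- `I - Q (QᵀQ)⁻¹ Qᵀ` is an orthogonal projection, hence positive semidefinite. -/
lemma aux_proj_posSemidef {p s : ℕ} (Q : Matrix (Fin p) (Fin s) ℝ)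
    (h : IsUnit (Qᵀ * Q).det) :
    (1 - Q * (Qᵀ * Q)⁻¹ * Qᵀ).PosSemidef := by
  have hsym : (Qᵀ * Q)ᵀ = Qᵀ * Q := by rw [transpose_mul, transpose_transpose]
  have hisym : ((Qᵀ * Q)⁻¹)ᵀ = (Qᵀ * Q)⁻¹ := by rw [transpose_nonsing_inv, hsym]
  have hKsym : (1 - Q * (Qᵀ * Q)⁻¹ * Qᵀ)ᵀ = 1 - Q * (Qᵀ * Q)⁻¹ * Qᵀ := by
    rw [transpose_sub, transpose_one, transpose_mul, transpose_mul,
      transpose_transpose, hisym, Matrix.mul_assoc]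
  have h1 : (Qᵀ * Q)⁻¹ * (Qᵀ * Q) = 1 := Matrix.nonsing_inv_mul _ h
  have hPi2 : (Q * (Qᵀ * Q)⁻¹ * Qᵀ) * (Q * (Qᵀ * Q)⁻¹ * Qᵀ)
      = Q * (Qᵀ * Q)⁻¹ * Qᵀ := by
    calc Q * (Qᵀ * Q)⁻¹ * Qᵀ * (Q * (Qᵀ * Q)⁻¹ * Qᵀ)
        = Q * ((Qᵀ * Q)⁻¹ * (Qᵀ * Q) * ((Qᵀ * Q)⁻¹ * Qᵀ)) := by
          simp only [Matrix.mul_assoc]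
      _ = Q * ((Qᵀ * Q)⁻¹ * Qᵀ) := by rw [h1, Matrix.one_mul]
      _ = Q * (Qᵀ * Q)⁻¹ * Qᵀ := by rw [Matrix.mul_assoc]
  have hKK : (1 - Q * (Qᵀ * Q)⁻¹ * Qᵀ) * (1 - Q * (Qᵀ * Q)⁻¹ * Qᵀ)
      = 1 - Q * (Qᵀ * Q)⁻¹ * Qᵀ := by
    rw [Matrix.sub_mul, Matrix.mul_sub, Matrix.mul_sub, Matrix.one_mul,
      Matrix.mul_one, hPi2]
    simp only [Matrix.one_mul]
    abel
  have : (1 - Q * (Qᵀ * Q)⁻¹ * Qᵀ)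
      = (1 - Q * (Qᵀ * Q)⁻¹ * Qᵀ)ᴴ * (1 - Q * (Qᵀ * Q)⁻¹ * Qᵀ) := by
    rw [conjTranspose_eq_transpose_of_trivial, hKsym, hKK]
  rw [this]
  exact posSemidef_conjTranspose_mul_self _

theorem subspace_covariance_loewner_le
    {p s nC : ℕ}
    (Ψ : Matrix (Fin p) (Fin p) ℝ) (hΨ : Ψ.PosDef)
    (J : Matrix (Fin nC) (Fin p) ℝ)
    (P : Matrix (Fin p) (Fin s) ℝ) (hP : P.rank = s) :
    (J * Ψ * Jᵀ - J * P * (Pᵀ * Ψ⁻¹ * P)⁻¹ * Pᵀ * Jᵀ).PosSemidef := by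
  have hΨi : Ψ⁻¹.PosDef := hΨ.inv
  have hΨisym : Ψ⁻¹ᵀ = Ψ⁻¹ := by
    rw [← conjTranspose_eq_transpose_of_trivial]
    exact hΨi.1
  -- P has injective mulVec
  have hPinj : Function.Injective P.mulVec := by
    have h1 := LinearMap.finrank_range_add_finrank_ker P.mulVecLin
    have h2 : Module.finrank ℝ (LinearMap.range P.mulVecLin) = s := hP
    have h3 : Module.finrank ℝ (Fin s → ℝ) = s := by simp
    rw [h2, h3] at h1
    have hker : LinearMap.ker P.mulVecLin = ⊥ :=
      Submodule.finrank_eq_zero.mp (by omega)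
    have := LinearMap.ker_eq_bot.mp hker
    intro x y hxy
    exact this (by simpa [mulVecLin_apply] using hxy)
  -- M := Pᵀ * Ψ⁻¹ * P is positive definite
  have hM : (Pᵀ * Ψ⁻¹ * P).PosDef := by
    refine posDef_iff_dotProduct_mulVec.mpr ⟨?_, fun x hx => ?_⟩
    · show (Pᵀ * Ψ⁻¹ * P)ᴴ = Pᵀ * Ψ⁻¹ * P
      rw [conjTranspose_eq_transpose_of_trivial, transpose_mul, transpose_mul,
        transpose_transpose, hΨisym, Matrix.mul_assoc]
    · have hPx : P *ᵥ x ≠ 0 := by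
        intro h
        exact hx (hPinj (by simpa using h))
      have := hΨi.dotProduct_mulVec_pos hPx
      simpa [star_trivial, ← mulVec_mulVec, dotProduct_mulVec, vecMul_transpose]
        using this
  have hMd : IsUnit (Pᵀ * Ψ⁻¹ * P).det := hM.det_pos.ne'.isUnit
  -- a symmetric square root B of Ψ
  obtain ⟨B, hBsym, hBB⟩ : ∃ B : Matrix (Fin p) (Fin p) ℝ, Bᵀ = B ∧ B * B = Ψ := by
    open scoped MatrixOrder in
    · refine ⟨CFC.sqrt Ψ, ?_, CFC.sqrt_mul_sqrt_self Ψ hΨ.posSemidef.nonneg⟩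
      rw [← conjTranspose_eq_transpose_of_trivial]
      exact (CFC.sqrt_nonneg Ψ).posSemidef.1
  have hBd : IsUnit B.det := by
    have hdet : B.det * B.det = Ψ.det := by rw [← det_mul, hBB]
    have : B.det ≠ 0 := by
      intro h
      exact hΨ.det_pos.ne' (by rw [← hdet, h, mul_zero])
    exact this.isUnit
  have hBisym : B⁻¹ᵀ = B⁻¹ := by rw [transpose_nonsing_inv, hBsym]
  have hΨinv : Ψ⁻¹ = B⁻¹ * B⁻¹ := by rw [← hBB, Matrix.mul_inv_rev]
  -- Q and its Gram matrix
  have hQt : (B⁻¹ * P)ᵀ = Pᵀ * B⁻¹ := by rw [transpose_mul, hBisym]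
  have hQtQ : (B⁻¹ * P)ᵀ * (B⁻¹ * P) = Pᵀ * Ψ⁻¹ * P := by
    rw [hQt, hΨinv]
    simp only [Matrix.mul_assoc]
  have hK : (1 - (B⁻¹ * P) * ((B⁻¹ * P)ᵀ * (B⁻¹ * P))⁻¹ * (B⁻¹ * P)ᵀ).PosSemidef :=
    aux_proj_posSemidef (B⁻¹ * P) (by rw [hQtQ]; exact hMd)
  -- the key algebraic identity
  have key : J * Ψ * Jᵀ - J * P * (Pᵀ * Ψ⁻¹ * P)⁻¹ * Pᵀ * Jᵀ
      = (J * B) * (1 - (B⁻¹ * P) * ((B⁻¹ * P)ᵀ * (B⁻¹ * P))⁻¹ * (B⁻¹ * P)ᵀ)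
        * (J * B)ᴴ := by
    rw [conjTranspose_eq_transpose_of_trivial, hQtQ, hQt, transpose_mul, hBsym,
      Matrix.mul_sub, Matrix.sub_mul, Matrix.mul_one]
    congr 1
    · rw [← hBB]
      simp only [Matrix.mul_assoc]
    ·
      have h1 : B * (B⁻¹ * (P * ((Pᵀ * Ψ⁻¹ * P)⁻¹ * (Pᵀ * (B⁻¹ * (B * Jᵀ))))))
          = P * ((Pᵀ * Ψ⁻¹ * P)⁻¹ * (Pᵀ * Jᵀ)) := by
        rw [Matrix.mul_nonsing_inv_cancel_left _ _ hBd,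
          Matrix.nonsing_inv_mul_cancel_left _ _ hBd]
      calc J * P * (Pᵀ * Ψ⁻¹ * P)⁻¹ * Pᵀ * Jᵀ
          = J * (P * ((Pᵀ * Ψ⁻¹ * P)⁻¹ * (Pᵀ * Jᵀ))) := by
            simp only [Matrix.mul_assoc]
        _ = J * (B * (B⁻¹ * (P * ((Pᵀ * Ψ⁻¹ * P)⁻¹ * (Pᵀ * (B⁻¹ * (B * Jᵀ))))))) := by
            rw [h1]
        _ = J * B * (B⁻¹ * P * (Pᵀ * Ψ⁻¹ * P)⁻¹ * (Pᵀ * B⁻¹)) * (B * Jᵀ) := by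
            simp only [Matrix.mul_assoc]
  rw [key]
  exact hK.mul_mul_conjTranspose_same (J * B)
end

section
/- Let Ψ be symmetric positive definite p×p, J an (nC)×p matrix of full rank nC (with nC ≤ p), and let Σ = J Ψ Jᵀ have eigendecomposition Σ = U Λ Uᵀ with U orthogonal and Λ diagonal with decreasing entries. For s ≤ nC, let U_s consist of the first s columns of U and Λ_s the top s×s block of Λ. Then P* = Ψ Jᵀ U_s has full column rank s, and Σ_{P*} := J P* ((P*)ᵀ Ψ⁻¹ P*)⁻¹ (P*)ᵀ Jᵀ = U_s Λ_s U_sᵀ. -/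
open Matrix

lemma aux_inj_of_rank {m n : ℕ} (A : Matrix (Fin m) (Fin n) ℝ) (hA : A.rank = n) :
    Function.Injective A.mulVec := by
  have hinj : Function.Injective A.mulVecLin := by
    rw [← LinearMap.ker_eq_bot]
    have h := A.mulVecLin.finrank_range_add_finrank_ker
    rw [show Module.finrank ℝ (LinearMap.range A.mulVecLin) = A.rank from rfl] at h
    simp only [Module.finrank_pi, Fintype.card_fin] at h
    rw [hA] at h
    have h0 : Module.finrank ℝ (LinearMap.ker A.mulVecLin) = 0 := by omega
    exact Submodule.finrank_eq_zero.mp h0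
  exact hinj

lemma aux_posdef_congr {m n : ℕ} {S : Matrix (Fin m) (Fin m) ℝ} (hS : S.PosDef)
    (B : Matrix (Fin m) (Fin n) ℝ) (hB : Function.Injective B.mulVec) :
    (Bᵀ * S * B).PosDef := by
  refine Matrix.PosDef.of_dotProduct_mulVec_pos ?_ ?_
  · have hh := hS.isHermitian
    rw [Matrix.IsHermitian, conjTranspose_eq_transpose_of_trivial] at hh ⊢
    rw [transpose_mul, transpose_mul, transpose_transpose, hh, Matrix.mul_assoc]
  · intro x hx
    have hBx : B.mulVec x ≠ 0 := fun h => hx (hB (h.trans (B.mulVec_zero).symm))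
    have := hS.dotProduct_mulVec_pos hBx
    simpa [← Matrix.mulVec_mulVec, Matrix.dotProduct_mulVec, Matrix.vecMul_transpose,
      star_trivial] using this

theorem optimal_subspace_model
    {p s nC : ℕ} (hnCp : nC ≤ p) (hs : s ≤ nC)
    (Ψ : Matrix (Fin p) (Fin p) ℝ) (hΨ : Ψ.PosDef)
    (J : Matrix (Fin nC) (Fin p) ℝ) (hJ : J.rank = nC)
    (U : Matrix (Fin nC) (Fin nC) ℝ) (d : Fin nC → ℝ)
    (hU : Uᵀ * U = 1 ∧ U * Uᵀ = 1)
    (hd : ∀ i j : Fin nC, i ≤ j → d j ≤ d i)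
    (hSpec : J * Ψ * Jᵀ = U * Matrix.diagonal d * Uᵀ) :
    (Ψ * Jᵀ * U.submatrix id (Fin.castLE hs)).rank = s ∧
    J * (Ψ * Jᵀ * U.submatrix id (Fin.castLE hs)) *
        ((Ψ * Jᵀ * U.submatrix id (Fin.castLE hs))ᵀ * Ψ⁻¹ *
          (Ψ * Jᵀ * U.submatrix id (Fin.castLE hs)))⁻¹ *
        (Ψ * Jᵀ * U.submatrix id (Fin.castLE hs))ᵀ * Jᵀ
      = U.submatrix id (Fin.castLE hs) * Matrix.diagonal (d ∘ Fin.castLE hs) *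
          (U.submatrix id (Fin.castLE hs))ᵀ := by
  classical
  set e : Fin s → Fin nC := Fin.castLE hs with he
  set Us : Matrix (Fin nC) (Fin s) ℝ := U.submatrix id e with hUs
  set E : Matrix (Fin nC) (Fin s) ℝ := (1 : Matrix (Fin nC) (Fin nC) ℝ).submatrix id e with hE
  have he_inj : Function.Injective e := Fin.castLE_injective hs
  -- U * E = Us
  have hUE : U * E = Us := by
    have := mul_submatrix_one (Equiv.refl (Fin nC)) e U
    simpa [hE, hUs] using this
  -- d is positive
  have hSpd : (J * Ψ * Jᵀ).PosDef := by
    have h1 : ((Jᵀ)ᵀ * Ψ * Jᵀ).PosDef :=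
      aux_posdef_congr hΨ Jᵀ (aux_inj_of_rank Jᵀ (by rw [Matrix.rank_transpose]; exact hJ))
    simpa using h1
  have hUinj : Function.Injective U.mulVec := by
    intro x y hxy
    have : Uᵀ.mulVec (U.mulVec x) = Uᵀ.mulVec (U.mulVec y) := by rw [hxy]
    simpa [Matrix.mulVec_mulVec, hU.1] using this
  have hDpd : (Matrix.diagonal d).PosDef := by
    have h1 : (Uᵀ * (J * Ψ * Jᵀ) * U).PosDef := aux_posdef_congr hSpd U hUinj
    have h2 : Uᵀ * (J * Ψ * Jᵀ) * U = Matrix.diagonal d := by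
      rw [hSpec]
      calc Uᵀ * (U * Matrix.diagonal d * Uᵀ) * U
          = (Uᵀ * U) * Matrix.diagonal d * (Uᵀ * U) := by
            simp only [Matrix.mul_assoc]
        _ = Matrix.diagonal d := by rw [hU.1]; simp
    rwa [h2] at h1
  have hdpos : ∀ i, 0 < d i := posDef_diagonal_iff.mp hDpd
  -- structural identities
  have h1 : Matrix.diagonal d * E = E * Matrix.diagonal (d ∘ e) := by
    ext i j
    simp only [hE, Matrix.diagonal_mul, Matrix.mul_diagonal, Matrix.submatrix_apply,
      Matrix.one_apply, Function.comp_apply, id_eq]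
    by_cases h : i = e j <;> simp [h]
  have h2 : Eᵀ * E = 1 := by
    ext i j
    simp only [Matrix.mul_apply, Matrix.transpose_apply, hE, Matrix.submatrix_apply,
      Matrix.one_apply, id_eq]
    by_cases h : i = j
    · subst h; simp [Finset.sum_ite_eq' Finset.univ (e i)]
    · have hne : e i ≠ e j := fun hc => h (he_inj hc)
      rw [Finset.sum_eq_zero]
      · simp [h]
      · intro k _
        by_cases hk : k = e i
        · subst hk; simp [hne]
        · simp [hk]
  have hUsUs : Usᵀ * Us = 1 := by
    rw [← hUE, Matrix.transpose_mul]
    calc Eᵀ * Uᵀ * (U * E) = Eᵀ * (Uᵀ * U) * E := by simp only [Matrix.mul_assoc]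
      _ = 1 := by rw [hU.1, Matrix.mul_one, h2]
  -- Σ Us = Us Λs
  have h3 : J * Ψ * Jᵀ * Us = Us * Matrix.diagonal (d ∘ e) := by
    rw [hSpec, ← hUE]
    calc U * Matrix.diagonal d * Uᵀ * (U * E)
        = U * (Matrix.diagonal d * E) := by
          rw [Matrix.mul_assoc (U * Matrix.diagonal d) Uᵀ (U * E),
            ← Matrix.mul_assoc Uᵀ U E, hU.1, Matrix.one_mul, Matrix.mul_assoc]
      _ = U * E * Matrix.diagonal (d ∘ e) := by rw [h1, Matrix.mul_assoc]
  set P : Matrix (Fin p) (Fin s) ℝ := Ψ * Jᵀ * Us with hP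
  have hΨs : Ψᵀ = Ψ := by
    have := hΨ.isHermitian
    rwa [Matrix.IsHermitian, conjTranspose_eq_transpose_of_trivial] at this
  have hΨdet : Ψ.det ≠ 0 := hΨ.det_pos.ne'
  -- Pᵀ Ψ⁻¹ P = Λs
  have h4 : Pᵀ * Ψ⁻¹ * P = Matrix.diagonal (d ∘ e) := by
    rw [hP]
    calc (Ψ * Jᵀ * Us)ᵀ * Ψ⁻¹ * (Ψ * Jᵀ * Us)
        = Usᵀ * ((Jᵀ)ᵀ * (Ψᵀ * (Ψ⁻¹ * Ψ) * Jᵀ * Us)) := by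
          simp only [Matrix.transpose_mul, Matrix.mul_assoc]
      _ = Usᵀ * (J * Ψ * Jᵀ * Us) := by
          rw [Matrix.nonsing_inv_mul Ψ hΨdet.isUnit, Matrix.mul_one, hΨs, transpose_transpose]
          simp only [Matrix.mul_assoc]
      _ = Matrix.diagonal (d ∘ e) := by
          rw [h3, ← Matrix.mul_assoc, hUsUs, Matrix.one_mul]
  have hΛdet : (Matrix.diagonal (d ∘ e)).det ≠ 0 := by
    rw [Matrix.det_diagonal]
    exact (Finset.prod_pos (fun i _ => hdpos (e i))).ne'
  constructor
  · -- rank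
    refine le_antisymm ?_ ?_
    · simpa using Matrix.rank_le_card_width P
    · have hrk : (Matrix.diagonal (d ∘ e)).rank = s := by
        rw [Matrix.rank_of_isUnit _ ((Matrix.isUnit_iff_isUnit_det _).mpr (Ne.isUnit hΛdet))]
        simp
      calc s = (Pᵀ * Ψ⁻¹ * P).rank := by rw [h4, hrk]
        _ ≤ P.rank := by
            rw [Matrix.mul_assoc]
            exact le_trans (Matrix.rank_mul_le_right _ _) (Matrix.rank_mul_le_right _ _)
  · -- main identity
    have hJP : J * P = Us * Matrix.diagonal (d ∘ e) := by
      rw [hP, ← Matrix.mul_assoc, ← Matrix.mul_assoc, h3]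
    have hPJ : Pᵀ * Jᵀ = Matrix.diagonal (d ∘ e) * Usᵀ := by
      rw [← Matrix.transpose_mul J P, hJP, Matrix.transpose_mul, Matrix.diagonal_transpose]
    rw [h4]
    calc J * P * (Matrix.diagonal (d ∘ e))⁻¹ * Pᵀ * Jᵀ
        = Us * Matrix.diagonal (d ∘ e) * (Matrix.diagonal (d ∘ e))⁻¹ *
            (Matrix.diagonal (d ∘ e) * Usᵀ) := by
          rw [hJP, Matrix.mul_assoc _ Pᵀ Jᵀ, hPJ]
      _ = Us * Matrix.diagonal (d ∘ e) * Usᵀ := by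
          rw [Matrix.mul_assoc Us, Matrix.mul_nonsing_inv _ hΛdet.isUnit, Matrix.mul_one,
            Matrix.mul_assoc]
end

section
/- Let Σ be a symmetric positive semidefinite n×n real matrix with eigendecomposition Σ = U Λ Uᵀ, where the diagonal entries of Λ are in decreasing order. For s ≤ n, the truncation U_s Λ_s U_sᵀ (keeping the s largest eigenvalues and corresponding eigenvectors) minimizes ‖A − Σ‖_F over all n×n matrices A with rank A ≤ s. -/
open Matrix RealInnerProductSpace

/-- Frobenius norm of a real matrix. -/
noncomputable def frobNorm {m n : ℕ} (A : Matrix (Fin m) (Fin n) ℝ) : ℝ :=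
  Real.sqrt (∑ i, ∑ j, (A i j) ^ 2)

/-- Squared Frobenius norm. -/
noncomputable def fsq {m n : ℕ} (A : Matrix (Fin m) (Fin n) ℝ) : ℝ :=
  ∑ i, ∑ j, (A i j) ^ 2

lemma frobNorm_eq_sqrt_fsq {m n : ℕ} (A : Matrix (Fin m) (Fin n) ℝ) :
    frobNorm A = Real.sqrt (fsq A) := rfl

lemma fsq_nonneg {m n : ℕ} (A : Matrix (Fin m) (Fin n) ℝ) : 0 ≤ fsq A := by
  unfold fsq; positivity

lemma fsq_eq_trace {m n : ℕ} (M : Matrix (Fin m) (Fin n) ℝ) :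
    fsq M = (Mᵀ * M).trace := by
  unfold fsq
  rw [Matrix.trace]
  simp only [Matrix.diag, Matrix.mul_apply, Matrix.transpose_apply, sq]
  exact Finset.sum_comm

lemma fsq_neg {m n : ℕ} (M : Matrix (Fin m) (Fin n) ℝ) : fsq (-M) = fsq M := by
  unfold fsq; simp

/-- Multiplying on the right by a matrix with orthonormal columns does not
increase the squared Frobenius norm. -/
lemma fsq_mul_le {m n k : ℕ} (M : Matrix (Fin m) (Fin n) ℝ)
    (V : Matrix (Fin n) (Fin k) ℝ) (hV : Vᵀ * V = 1) :
    fsq (M * V) ≤ fsq M := by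
  set P : Matrix (Fin n) (Fin n) ℝ := V * Vᵀ with hP
  have hPP : P * P = P := by
    rw [hP, Matrix.mul_assoc, ← Matrix.mul_assoc Vᵀ V Vᵀ, hV, Matrix.one_mul]
  have hPt : Pᵀ = P := by rw [hP, Matrix.transpose_mul, Matrix.transpose_transpose]
  have htrP : (Mᵀ * M * P).trace = fsq (M * V) := by
    rw [fsq_eq_trace, Matrix.transpose_mul, hP, ← Matrix.mul_assoc,
      Matrix.trace_mul_comm (Mᵀ * M * V) Vᵀ, ← Matrix.mul_assoc, ← Matrix.mul_assoc]
    congr 1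
    rw [Matrix.mul_assoc]
  have key : fsq M - fsq (M * V) = fsq (M - M * P) := by
    rw [fsq_eq_trace (M - M * P)]
    have expand : (M - M * P)ᵀ * (M - M * P)
        = Mᵀ * M - Mᵀ * M * P - P * (Mᵀ * M) + P * (Mᵀ * M) * P := by
      rw [Matrix.transpose_sub, Matrix.transpose_mul, hPt]
      simp only [Matrix.sub_mul, Matrix.mul_sub, Matrix.mul_assoc, sub_eq_add_neg,
        Matrix.mul_add, Matrix.add_mul, Matrix.neg_mul, Matrix.mul_neg, neg_neg]
      abel
    rw [expand, Matrix.trace_add, Matrix.trace_sub, Matrix.trace_sub]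
    have h1 : (P * (Mᵀ * M)).trace = (Mᵀ * M * P).trace :=
      Matrix.trace_mul_comm P (Mᵀ * M)
    have h2 : (P * (Mᵀ * M) * P).trace = (Mᵀ * M * P).trace := by
      rw [Matrix.trace_mul_comm (P * (Mᵀ * M)) P, ← Matrix.mul_assoc,
        hPP]
      exact Matrix.trace_mul_comm P (Mᵀ * M)
    rw [h1, h2, htrP, fsq_eq_trace M]
    ring
  have hnn := fsq_nonneg (M - M * P)
  linarith

/-- Conjugation by an orthogonal matrix preserves the squared Frobenius norm. -/
lemma fsq_conj {n : ℕ} (W M : Matrix (Fin n) (Fin n) ℝ)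
    (h1 : Wᵀ * W = 1) (h2 : W * Wᵀ = 1) :
    fsq (W * M * Wᵀ) = fsq M := by
  rw [fsq_eq_trace, fsq_eq_trace]
  have : (W * M * Wᵀ)ᵀ * (W * M * Wᵀ) = W * (Mᵀ * M) * Wᵀ := by
    rw [Matrix.transpose_mul, Matrix.transpose_mul, Matrix.transpose_transpose]
    calc W * (Mᵀ * Wᵀ) * (W * M * Wᵀ)
        = W * (Mᵀ * ((Wᵀ * W) * (M * Wᵀ))) := by noncomm_ring
      _ = W * (Mᵀ * M) * Wᵀ := by rw [h1, Matrix.one_mul]; noncomm_ring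
  rw [this, Matrix.trace_mul_comm (W * (Mᵀ * M)) Wᵀ, ← Matrix.mul_assoc, h1,
    Matrix.one_mul]

lemma card_ge_filter {n s : ℕ} :
    ∑ i : Fin n, (if (i : ℕ) < s then (0 : ℝ) else 1) = ((n - s : ℕ) : ℝ) := by
  rw [Fin.sum_univ_eq_sum_range (fun i => if i < s then (0 : ℝ) else 1)]
  rw [Finset.sum_ite]
  simp only [Finset.sum_const_zero, zero_add, Finset.sum_const, nsmul_eq_mul, mul_one]
  have hfe : (Finset.range n).filter (fun i => ¬ i < s) = Finset.Ico s n := by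
    ext x
    simp only [Finset.mem_filter, Finset.mem_range, Finset.mem_Ico, not_lt]
    omega
  rw [hfe, Nat.card_Ico]

/-- The rearrangement-type inequality at the heart of Eckart–Young. -/
lemma rearrange {n s : ℕ} (hs : s ≤ n) (c r : Fin n → ℝ)
    (hc : ∀ i j : Fin n, i ≤ j → c j ≤ c i) (hc0 : ∀ i, 0 ≤ c i)
    (hr0 : ∀ i, 0 ≤ r i) (hr1 : ∀ i, r i ≤ 1)
    (hrs : ∑ i, r i = ((n - s : ℕ) : ℝ)) :
    ∑ i : Fin n, (if (i : ℕ) < s then 0 else c i) ≤ ∑ i, c i * r i := by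
  rcases lt_or_ge s n with hlt | hge
  · set i0 : Fin n := ⟨s, hlt⟩ with hi0
    set t : ℝ := c i0 with ht
    have key : ∀ i : Fin n,
        (if (i : ℕ) < s then t * r i else t * (r i - 1))
          ≤ c i * r i - (if (i : ℕ) < s then 0 else c i) := by
      intro i
      by_cases h : (i : ℕ) < s
      · simp only [h, if_true, sub_zero]
        have hci : t ≤ c i := hc i i0 (by simp [Fin.le_def, hi0]; omega)
        exact mul_le_mul_of_nonneg_right hci (hr0 i)
      · simp only [h, if_false]
        have hci : c i ≤ t := hc i0 i (by simp [Fin.le_def, hi0]; omega)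
        have h1 : r i - 1 ≤ 0 := by linarith [hr1 i]
        nlinarith
    have hsum := Finset.sum_le_sum (s := Finset.univ) (fun i _ => key i)
    have left : ∑ i : Fin n, (if (i : ℕ) < s then t * r i else t * (r i - 1))
        = t * (∑ i, r i - ∑ i : Fin n, (if (i : ℕ) < s then (0:ℝ) else 1)) := by
      rw [mul_sub, Finset.mul_sum, Finset.mul_sum, ← Finset.sum_sub_distrib]
      apply Finset.sum_congr rfl
      intro i _
      by_cases h : (i : ℕ) < s <;> simp [h] <;> ring
    have lz : ∑ i : Fin n, (if (i : ℕ) < s then t * r i else t * (r i - 1)) = 0 := by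
      rw [left, hrs, card_ge_filter, sub_self, mul_zero]
    rw [lz] at hsum
    rw [Finset.sum_sub_distrib] at hsum
    linarith
  · have hall : ∀ i : Fin n, (i : ℕ) < s := fun i => lt_of_lt_of_le i.2 hge
    have : ∑ i : Fin n, (if (i : ℕ) < s then (0:ℝ) else c i) = 0 := by
      apply Finset.sum_eq_zero; intro i _; simp [hall i]
    rw [this]
    exact Finset.sum_nonneg fun i _ => mul_nonneg (hc0 i) (hr0 i)

/-- A matrix of rank at most `s` admits `n - s` orthonormal null vectors. -/
lemma exists_null_orthonormal {n s : ℕ} (hs : s ≤ n)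
    (B : Matrix (Fin n) (Fin n) ℝ) (hB : B.rank ≤ s) :
    ∃ V : Matrix (Fin n) (Fin (n - s)) ℝ, Vᵀ * V = 1 ∧ B * V = 0 := by
  classical
  set eqv : EuclideanSpace ℝ (Fin n) ≃ₗ[ℝ] (Fin n → ℝ) :=
    WithLp.linearEquiv 2 ℝ (Fin n → ℝ) with heqv
  set K' : Submodule ℝ (Fin n → ℝ) := LinearMap.ker B.mulVecLin with hK'
  set K : Submodule ℝ (EuclideanSpace ℝ (Fin n)) := K'.map (eqv.symm : _ ≃ₗ[ℝ] _).toLinearMap with hK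
  have hfrk : Module.finrank ℝ K = Module.finrank ℝ K' :=
    LinearEquiv.finrank_map_eq eqv.symm K'
  have hrn := LinearMap.finrank_range_add_finrank_ker B.mulVecLin
  have hdom : Module.finrank ℝ (Fin n → ℝ) = n := by simp
  have hrank : B.rank = Module.finrank ℝ (LinearMap.range B.mulVecLin) := rfl
  have hrg : Module.finrank ℝ (LinearMap.range B.mulVecLin) ≤ s := hrank ▸ hB
  have hker : Module.finrank ℝ K' = Module.finrank ℝ (LinearMap.ker B.mulVecLin) := rfl
  have hdim : n - s ≤ Module.finrank ℝ K := by
    rw [hfrk]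
    omega
  have : FiniteDimensional ℝ K := inferInstance
  set ob := stdOrthonormalBasis ℝ K with hob
  set v : Fin (n - s) → EuclideanSpace ℝ (Fin n) :=
    fun j => (ob (Fin.castLE hdim j) : EuclideanSpace ℝ (Fin n)) with hv
  have hvmem : ∀ j, v j ∈ K := fun j => (ob (Fin.castLE hdim j)).2
  have hortho : ∀ j l, ⟪v j, v l⟫ = if j = l then (1:ℝ) else 0 := by
    intro j l
    have h1 : ⟪v j, v l⟫ = ⟪ob (Fin.castLE hdim j), ob (Fin.castLE hdim l)⟫ :=
      (Submodule.coe_inner K _ _).symm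
    rw [h1, orthonormal_iff_ite.mp ob.orthonormal]
    by_cases h : j = l
    · simp [h]
    · simp [h, fun hc => h (Fin.castLE_injective hdim hc)]
  refine ⟨Matrix.of (fun i j => v j i), ?_, ?_⟩
  · ext j l
    have := hortho j l
    rw [PiLp.inner_apply] at this
    simp only [RCLike.inner_apply, starRingEnd_apply, star_trivial] at this
    simp only [Matrix.mul_apply, Matrix.transpose_apply, Matrix.of_apply,
      Matrix.one_apply]
    rw [← this]
    exact Finset.sum_congr rfl fun x _ => mul_comm _ _
  · ext i j
    have hm : B.mulVec (fun i => v j i) = 0 := by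
      have := hvmem j
      rw [hK, Submodule.mem_map] at this
      obtain ⟨y, hy1, hy2⟩ := this
      have : eqv (v j) ∈ K' := by
        rw [← hy2]; simpa using hy1
      rw [hK', LinearMap.mem_ker] at this
      have happ : B.mulVecLin (eqv (v j)) = 0 := this
      rw [Matrix.mulVecLin_apply] at happ
      exact happ
    have := congrFun hm i
    simp only [Matrix.mulVec, dotProduct] at this
    simp only [Matrix.mul_apply, Matrix.of_apply, Matrix.zero_apply]
    exact this

theorem eckart_young_mirsky_psd
    {n s : ℕ} (hs : s ≤ n)
    (S : Matrix (Fin n) (Fin n) ℝ) (hS : S.PosSemidef)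
    (U : Matrix (Fin n) (Fin n) ℝ) (d : Fin n → ℝ)
    (hU : Uᵀ * U = 1 ∧ U * Uᵀ = 1)
    (hd : ∀ i j : Fin n, i ≤ j → d j ≤ d i)
    (hSpec : S = U * Matrix.diagonal d * Uᵀ) :
    ∀ A : Matrix (Fin n) (Fin n) ℝ, A.rank ≤ s →
      frobNorm (U.submatrix id (Fin.castLE hs) * Matrix.diagonal (d ∘ Fin.castLE hs) *
          (U.submatrix id (Fin.castLE hs))ᵀ - S)
        ≤ frobNorm (A - S) := by
  classical
  obtain ⟨hU1, hU2⟩ := hU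
  intro A hA
  set D : Matrix (Fin n) (Fin n) ℝ := Matrix.diagonal d with hD
  -- d is nonnegative
  have hDS : Uᵀ * S * U = D := by
    rw [hSpec]
    calc Uᵀ * (U * D * Uᵀ) * U = (Uᵀ * U) * D * (Uᵀ * U) := by noncomm_ring
      _ = D := by rw [hU1, Matrix.one_mul, Matrix.mul_one]
  have hDpsd : D.PosSemidef := by
    rw [← hDS]
    have := hS.mul_mul_conjTranspose_same Uᵀ
    simpa using this
  have hd0 : ∀ i, 0 ≤ d i := by
    rw [hD, Matrix.posSemidef_diagonal_iff] at hDpsd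
    exact hDpsd
  -- the truncated matrix as a conjugated diagonal
  set e : Fin n → ℝ := fun i => if (i : ℕ) < s then 0 else -d i with he
  have conj_diag_apply : ∀ {m : ℕ} (W : Matrix (Fin n) (Fin m) ℝ) (w : Fin m → ℝ)
      (i j : Fin n), (W * Matrix.diagonal w * Wᵀ) i j = ∑ k, W i k * w k * W j k := by
    intro m W w i j
    rw [Matrix.mul_apply]
    simp [Matrix.mul_diagonal, Matrix.transpose_apply]
  have hset : Finset.univ.filter (fun k : Fin n => (k : ℕ) < s)
      = Finset.univ.map (Fin.castLEEmb hs) := by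
    ext k
    simp only [Finset.mem_filter, Finset.mem_univ, true_and, Finset.mem_map]
    constructor
    · intro h
      exact ⟨⟨(k : ℕ), h⟩, by ext; rfl⟩
    · rintro ⟨a, rfl⟩
      exact a.2
  have hM1 : U.submatrix id (Fin.castLE hs) * Matrix.diagonal (d ∘ Fin.castLE hs) *
      (U.submatrix id (Fin.castLE hs))ᵀ
      = U * Matrix.diagonal (fun i : Fin n => if (i : ℕ) < s then d i else 0) * Uᵀ := by
    ext i j
    rw [conj_diag_apply, conj_diag_apply]
    have : ∀ k : Fin n, U i k * (if (k : ℕ) < s then d k else 0) * U j k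
        = if (k : ℕ) < s then U i k * d k * U j k else 0 := by
      intro k; by_cases h : (k : ℕ) < s <;> simp [h]
    rw [Finset.sum_congr rfl (fun k _ => this k), Finset.sum_ite, Finset.sum_const_zero,
      add_zero, hset, Finset.sum_map]
    rfl
  have hLHSmat : U.submatrix id (Fin.castLE hs) * Matrix.diagonal (d ∘ Fin.castLE hs) *
      (U.submatrix id (Fin.castLE hs))ᵀ - S = U * Matrix.diagonal e * Uᵀ := by
    rw [hM1, hSpec, ← Matrix.sub_mul, ← Matrix.mul_sub, hD, Matrix.diagonal_sub]
    have harg : (fun i : Fin n => (if (i : ℕ) < s then d i else 0) - d i) = e := by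
      funext i
      by_cases h : (i : ℕ) < s <;> simp [he, h]
    rw [harg]
  have hfsqL : fsq (U * Matrix.diagonal e * Uᵀ)
      = ∑ i : Fin n, (if (i : ℕ) < s then 0 else d i ^ 2) := by
    rw [fsq_conj U _ hU1 hU2]
    unfold fsq
    apply Finset.sum_congr rfl
    intro i _
    have : ∀ j : Fin n, (Matrix.diagonal e i j) ^ 2
        = if j = i then e i ^ 2 else 0 := by
      intro j
      rcases eq_or_ne j i with h | h
      · simp [h, Matrix.diagonal_apply_eq]
      · simp [h, Matrix.diagonal_apply_ne' _ h]
    rw [Finset.sum_congr rfl (fun j _ => this j), Finset.sum_ite_eq']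
    simp only [Finset.mem_univ, if_true]
    by_cases h : (i : ℕ) < s <;> simp [he, h]
  -- pass to B = Uᵀ A U
  set B : Matrix (Fin n) (Fin n) ℝ := Uᵀ * A * U with hB
  have hrB : B.rank ≤ s :=
    le_trans (Matrix.rank_mul_le_left (Uᵀ * A) U)
      (le_trans (Matrix.rank_mul_le_right Uᵀ A) hA)
  obtain ⟨V, hV1, hV2⟩ := exists_null_orthonormal hs B hrB
  set r : Fin n → ℝ := fun i => ∑ j, (V i j) ^ 2 with hr
  have hr0 : ∀ i, 0 ≤ r i := by
    intro i; rw [hr]; positivity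
  have hrsum : ∑ i, r i = ((n - s : ℕ) : ℝ) := by
    rw [hr]
    rw [Finset.sum_comm]
    have : ∀ j : Fin (n - s), ∑ i, V i j ^ 2 = (Vᵀ * V) j j := by
      intro j
      rw [Matrix.mul_apply]
      apply Finset.sum_congr rfl
      intro i _
      rw [Matrix.transpose_apply, sq]
    rw [Finset.sum_congr rfl (fun j _ => this j), hV1]
    simp [Matrix.one_apply]
  have hr1 : ∀ i, r i ≤ 1 := by
    intro i
    set P : Matrix (Fin n) (Fin n) ℝ := V * Vᵀ with hP
    have hPt : Pᵀ = P := by rw [hP, Matrix.transpose_mul, Matrix.transpose_transpose]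
    have hPP : P * P = P := by
      rw [hP, Matrix.mul_assoc, ← Matrix.mul_assoc Vᵀ V Vᵀ, hV1, Matrix.one_mul]
    have hrP : r i = P i i := by
      rw [hr, hP, Matrix.mul_apply]
      apply Finset.sum_congr rfl
      intro j _
      rw [Matrix.transpose_apply, sq]
    have hPsq : P i i = ∑ k, (P i k) ^ 2 := by
      conv_lhs => rw [← hPP]
      rw [Matrix.mul_apply]
      apply Finset.sum_congr rfl
      intro k _
      rw [sq]
      congr 1
      calc P k i = Pᵀ i k := rfl
        _ = P i k := by rw [hPt]
    have hge : P i i ^ 2 ≤ ∑ k, (P i k) ^ 2 := by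
      have := Finset.single_le_sum (f := fun k => (P i k) ^ 2)
        (fun k _ => sq_nonneg _) (Finset.mem_univ i)
      simpa using this
    nlinarith [hr0 i, hrP, hPsq, hge]
  have hc : ∀ i j : Fin n, i ≤ j → d j ^ 2 ≤ d i ^ 2 := by
    intro i j hij
    have := hd i j hij
    nlinarith [hd0 j, hd0 i]
  have h1 : ∑ i : Fin n, (if (i : ℕ) < s then 0 else d i ^ 2)
      ≤ ∑ i, d i ^ 2 * r i :=
    rearrange hs (fun i => d i ^ 2) r hc (fun i => sq_nonneg _) hr0 hr1 hrsum
  have h2 : ∑ i, d i ^ 2 * r i = fsq (D * V) := by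
    unfold fsq
    rw [hD]
    apply Finset.sum_congr rfl
    intro i _
    rw [hr, Finset.mul_sum]
    apply Finset.sum_congr rfl
    intro j _
    rw [Matrix.diagonal_mul, mul_pow]
  have h3 : fsq (D * V) = fsq ((B - D) * V) := by
    have : (B - D) * V = -(D * V) := by
      rw [Matrix.sub_mul, hV2, zero_sub]
    rw [this, fsq_neg]
  have h4 : fsq ((B - D) * V) ≤ fsq (B - D) := fsq_mul_le _ V hV1
  have h5 : fsq (B - D) = fsq (A - S) := by
    have hBD : B - D = Uᵀ * (A - S) * Uᵀᵀ := by
      rw [Matrix.transpose_transpose, Matrix.mul_sub, Matrix.sub_mul, hB, ← hDS]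
    rw [hBD]
    exact fsq_conj Uᵀ (A - S) (by rw [Matrix.transpose_transpose]; exact hU2)
      (by rw [Matrix.transpose_transpose]; exact hU1)
  rw [frobNorm_eq_sqrt_fsq, frobNorm_eq_sqrt_fsq]
  apply Real.sqrt_le_sqrt
  rw [hLHSmat, hfsqL]
  linarith
end
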